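/- arXiv:2510.04990 — 4 statements merged into one kernel-verified Lean document; each statement's English description precedes it below -/
import Mathlib

section
/- Let D be a loopless digon-free digraph on n vertices, let 2 ≤ k ≤ min{l,n}, and let α and β be acyclic l-colorings of D such that β has k color classes each of size exactly 1, say C_1^β,…,C_k^β, and α(u) = β(u) for every vertex u not in C_1^β ∪ ⋯ ∪ C_k^β. Then α can be transformed into β by at most k single-vertex recolorings, each intermediate coloring being an acyclic l-coloring (equivalently, d(α,β) ≤ k in the dicoloring graph). -/
/-- A set `S` of vertices induces an acyclic subdigraph of the digraph with
arc relation `A`: there is no directed cycle within `S`. -/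
def AcyclicOn {V : Type*} (A : V → V → Prop) (S : Set V) : Prop :=
  ∀ v, ¬ Relation.TransGen (fun x y => x ∈ S ∧ y ∈ S ∧ A x y) v v

/-- An acyclic `k`-coloring: every color class induces an acyclic subdigraph. -/
def IsAcyclicColoring {V : Type*} (A : V → V → Prop) (k : ℕ) (α : V → Fin k) : Prop :=
  ∀ c : Fin k, AcyclicOn A {v | α v = c}

/-- The `k`-dicoloring graph: vertices are acyclic `k`-colorings, two colorings
adjacent when they differ on exactly one vertex. -/
def DicolGraph {V : Type*} (A : V → V → Prop) (k : ℕ) :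
    SimpleGraph {α : V → Fin k // IsAcyclicColoring A k α} where
  Adj α β := ∃! v, α.1 v ≠ β.1 v
  symm := by
    constructor
    rintro α β ⟨v, hv, hu⟩
    exact ⟨v, Ne.symm hv, fun w hw => hu w (Ne.symm hw)⟩
  loopless := by
    constructor
    rintro α ⟨v, hv, -⟩
    exact hv rfl

/-- The cyclic circulant tournament on `ZMod (2n+1)` with jumps `1,…,n`. -/
def CycArc (n : ℕ) (a b : ZMod (2*n+1)) : Prop := (b - a).val ∈ Finset.Icc 1 n

/-- The tournament obtained from `CycArc n` by reversing the jump `n`. -/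
def RevArc (n : ℕ) (a b : ZMod (2*n+1)) : Prop :=
  (b - a).val ∈ Finset.Icc 1 (n-1) ∨ (b - a).val = n + 1

/-- A forbidden triangle in `C_{2n+1}⟨n⟩`. -/
def ForbiddenTriangle (n : ℕ) (S : Set (ZMod (2*n+1))) : Prop :=
  ∃ i : ZMod (2*n+1), S = {i, i + n, i + n + 1}

lemma acyclicOn_mono {V : Type*} (A : V → V → Prop) {S T : Set V} (h : S ⊆ T)
    (hT : AcyclicOn A T) : AcyclicOn A S := fun v hv =>
  hT v (Relation.TransGen.mono (fun _ _ ⟨hx, hy, ha⟩ => ⟨h hx, h hy, ha⟩) v v hv)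

lemma acyclicOn_pair {V : Type*} (A : V → V → Prop) (hloop : ∀ v, ¬ A v v)
    (hdigon : ∀ u v, A u v → ¬ A v u) (a b : V) : AcyclicOn A {a, b} := by
  intro w hw
  have key : ∀ x y, Relation.TransGen
      (fun x y => x ∈ ({a, b} : Set V) ∧ y ∈ ({a, b} : Set V) ∧ A x y) x y →
      x ∈ ({a, b} : Set V) ∧ y ∈ ({a, b} : Set V) ∧ A x y := by
    intro x y h
    induction h with
    | single h => exact h
    | tail _ h₃ ih =>
      obtain ⟨hx, hy, hxy⟩ := ih
      obtain ⟨hy', hz, hyz⟩ := h₃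
      rename_i y' z _
      have hxy' : x ≠ y' := fun e => hloop _ (e ▸ hxy)
      have hyz' : y' ≠ z := fun e => hloop _ (e ▸ hyz)
      have hxz : x = z := by
        rcases hx with rfl | rfl <;> rcases hy with rfl | rfl <;>
          rcases hz with rfl | rfl <;> simp_all
      exact absurd (hxz ▸ hyz) (hdigon x y' hxy)
  obtain ⟨_, _, hww⟩ := key w w hw
  exact hloop w hww

theorem stmt1 {V : Type*} [Fintype V] (n : ℕ) (hcard : Fintype.card V = n)
    (A : V → V → Prop) (hloop : ∀ v, ¬ A v v) (hdigon : ∀ u v, A u v → ¬ A v u)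
    (k l : ℕ) (hk2 : 2 ≤ k) (hkl : k ≤ l) (hkn : k ≤ n)
    (α β : V → Fin l)
    (hα : IsAcyclicColoring A l α) (hβ : IsAcyclicColoring A l β)
    (C : Fin k → Fin l) (hCinj : Function.Injective C)
    (hsing : ∀ i : Fin k, Set.ncard {v | β v = C i} = 1)
    (hagree : ∀ u : V, (∀ i : Fin k, β u ≠ C i) → α u = β u) :
    (DicolGraph A l).Reachable ⟨α, hα⟩ ⟨β, hβ⟩ ∧
      (DicolGraph A l).dist ⟨α, hα⟩ ⟨β, hβ⟩ ≤ k := by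
  classical
  have hv0 : ∀ i : Fin k, ∃ w : V, {x | β x = C i} = {w} := fun i =>
    Set.ncard_eq_one.mp (hsing i)
  choose v hv using hv0
  have hβv : ∀ i, β (v i) = C i := fun i => by
    have : v i ∈ {x | β x = C i} := by rw [hv i]; rfl
    exact this
  have hβ_iff : ∀ (i : Fin k) (w : V), β w = C i → w = v i := fun i w h => by
    have : w ∈ ({v i} : Set V) := by rw [← hv i]; exact h
    exact this
  have hvinj : Function.Injective v := fun i j hij =>
    hCinj (by rw [← hβv i, ← hβv j, hij])
  have pair := acyclicOn_pair A hloop hdigon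
  have key : ∀ N : ℕ, ∀ T : Finset (Fin k), Tᶜ.card ≤ N →
      ∀ (γ : V → Fin l) (hγ : IsAcyclicColoring A l γ),
      (∀ w : V, (∀ m : Fin k, w ≠ v m) → γ w = β w) →
      (∀ m ∈ T, γ (v m) = C m) →
      (∀ m ∉ T, γ (v m) = α (v m)) →
      ∃ p : (DicolGraph A l).Walk ⟨γ, hγ⟩ ⟨β, hβ⟩, p.length ≤ Tᶜ.card := by
    intro N
    induction N with
    | zero =>
      intro T hT γ hγ I1 I2 I3
      have hTc : Tᶜ = ∅ := Finset.card_eq_zero.mp (Nat.le_zero.mp hT)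
      have hTuniv : T = Finset.univ := by
        rwa [← Finset.compl_eq_empty_iff]
      have hγβ : γ = β := funext fun w => by
        by_cases hw : ∃ m : Fin k, w = v m
        · obtain ⟨m, rfl⟩ := hw
          rw [I2 m (hTuniv ▸ Finset.mem_univ m), hβv m]
        · push_neg at hw
          exact I1 w hw
      subst hγβ
      exact ⟨SimpleGraph.Walk.nil, by simp⟩
    | succ N ih =>
      intro T hT γ hγ I1 I2 I3
      by_cases hle : Tᶜ.card ≤ N
      · exact ih T hle γ hγ I1 I2 I3
      have hcard : Tᶜ.card = N + 1 := le_antisymm hT (not_le.mp hle)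
      by_cases hnoop : ∃ i ∈ Tᶜ, α (v i) = C i
      · obtain ⟨i, hiT, hαi⟩ := hnoop
        have hmem : i ∉ T := Finset.mem_compl.mp hiT
        have hc' : (insert i T)ᶜ.card ≤ N := by
          rw [Finset.compl_insert, Finset.card_erase_of_mem hiT]
          omega
        obtain ⟨p, hp⟩ := ih (insert i T) hc' γ hγ I1
          (by
            intro m hm
            rcases Finset.mem_insert.mp hm with rfl | hm
            · rw [I3 m hmem, hαi]
            · exact I2 m hm)
          (fun m hm => I3 m (fun h => hm (Finset.mem_insert_of_mem h)))
        exact ⟨p, by omega⟩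
      · push_neg at hnoop
        have hpick : ∃ i ∈ Tᶜ,
            (Tᶜ.filter (fun m => m ≠ i ∧ α (v m) = C i)).card ≤ 1 := by
          by_contra hcon
          push_neg at hcon
          have hdisj : (↑(Tᶜ : Finset (Fin k)) : Set (Fin k)).PairwiseDisjoint
              (fun i => Tᶜ.filter (fun m => m ≠ i ∧ α (v m) = C i)) := by
            intro i _ j _ hij
            apply Finset.disjoint_left.mpr
            intro m hmi hmj
            simp only [Finset.mem_filter] at hmi hmj
            exact hij (hCinj (hmi.2.2 ▸ hmj.2.2))
          have h1 : (Tᶜ.biUnion (fun i => Tᶜ.filter (fun m => m ≠ i ∧ α (v m) = C i))).card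
              = ∑ i ∈ Tᶜ, (Tᶜ.filter (fun m => m ≠ i ∧ α (v m) = C i)).card :=
            Finset.card_biUnion hdisj
          have h2 : (Tᶜ.biUnion (fun i => Tᶜ.filter (fun m => m ≠ i ∧ α (v m) = C i))).card
              ≤ Tᶜ.card :=
            Finset.card_le_card (Finset.biUnion_subset.mpr fun i _ => Finset.filter_subset _ _)
          have h3 : 2 * Tᶜ.card ≤ ∑ i ∈ Tᶜ, (Tᶜ.filter (fun m => m ≠ i ∧ α (v m) = C i)).card := by
            calc 2 * Tᶜ.card = ∑ _i ∈ Tᶜ, 2 := by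
                  rw [Finset.sum_const, smul_eq_mul, mul_comm]
              _ ≤ _ := Finset.sum_le_sum fun i hi => hcon i hi
          omega
        obtain ⟨i, hiT, hpred⟩ := hpick
        have hmem : i ∉ T := Finset.mem_compl.mp hiT
        set γ' := Function.update γ (v i) (C i) with hγ'def
        have : Nonempty (Fin k) := ⟨⟨0, by omega⟩⟩
        obtain ⟨m₀, hm₀⟩ := Finset.card_le_one_iff_subset_singleton.mp hpred
        have hγ'cls : ∀ w : V, w ≠ v i → γ' w = γ w := fun w hw =>
          Function.update_of_ne hw _ _
        have hγ'i : γ' (v i) = C i := Function.update_self _ _ _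
        have hγ'acy : IsAcyclicColoring A l γ' := by
          intro c
          by_cases hc : c = C i
          · subst hc
            apply acyclicOn_mono A _ (pair (v i) (v m₀))
            intro w hw
            by_cases hwi : w = v i
            · exact Or.inl hwi
            · have hγw : γ w = C i := (hγ'cls w hwi) ▸ hw
              by_cases hwm : ∃ m : Fin k, w = v m
              · obtain ⟨m, rfl⟩ := hwm
                by_cases hmT : m ∈ T
                · exact absurd (congrArg v (hCinj ((I2 m hmT) ▸ hγw))) hwi
                · have hαm : α (v m) = C i := (I3 m hmT) ▸ hγw
                  have hmne : m ≠ i := fun e => hwi (congrArg v e)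
                  have : m ∈ Tᶜ.filter (fun m => m ≠ i ∧ α (v m) = C i) :=
                    Finset.mem_filter.mpr ⟨Finset.mem_compl.mpr hmT, hmne, hαm⟩
                  have := Finset.mem_singleton.mp (hm₀ this)
                  subst this
                  exact Or.inr rfl
              · push_neg at hwm
                exact absurd (hβ_iff i w ((I1 w hwm) ▸ hγw)) hwi
          · apply acyclicOn_mono A _ (hγ c)
            intro w hw
            by_cases hwi : w = v i
            · exact absurd (hwi ▸ hw : γ' (v i) = c) (by rw [hγ'i]; exact fun e => hc e.symm)
            · show γ w = c
              rw [← hγ'cls w hwi]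
              exact hw
        have hne2 : γ (v i) ≠ C i := by
          rw [I3 i hmem]; exact hnoop i hiT
        have hadj : (DicolGraph A l).Adj ⟨γ, hγ⟩ ⟨γ', hγ'acy⟩ := by
          refine ⟨v i, ?_, ?_⟩
          · show γ (v i) ≠ γ' (v i)
            rw [hγ'i]; exact hne2
          · intro w hw
            by_contra hwvi
            exact hw ((hγ'cls w hwvi).symm)
        have hc' : (insert i T)ᶜ.card ≤ N := by
          rw [Finset.compl_insert, Finset.card_erase_of_mem hiT]
          omega
        obtain ⟨p, hp⟩ := ih (insert i T) hc' γ' hγ'acy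
          (fun w hw => (hγ'cls w (hw i)) ▸ I1 w hw)
          (by
            intro m hm
            rcases Finset.mem_insert.mp hm with rfl | hm
            · exact hγ'i
            · have hmi : m ≠ i := fun e => hmem (e ▸ hm)
              rw [hγ'cls (v m) (fun e => hmi (hvinj e)), I2 m hm])
          (by
            intro m hm
            have hmi : m ≠ i := fun e => hm (e ▸ Finset.mem_insert_self i T)
            rw [hγ'cls (v m) (fun e => hmi (hvinj e))]
            exact I3 m (fun h => hm (Finset.mem_insert_of_mem h)))
        refine ⟨SimpleGraph.Walk.cons hadj p, ?_⟩
        rw [SimpleGraph.Walk.length_cons]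
        omega
  obtain ⟨p, hp⟩ := key k (∅ : Finset (Fin k)) (by simp) α hα
    (fun w hw => hagree w (fun i hi => hw i (hβ_iff i w hi)))
    (fun m hm => absurd hm (Finset.notMem_empty m))
    (fun m _ => rfl)
  have hlen : p.length ≤ k := le_trans hp (by simp)
  exact ⟨⟨p⟩, le_trans (SimpleGraph.dist_le p) hlen⟩
end

section
/- Let n ≥ 1 and let w, x, y be three distinct vertices of the cyclic circulant tournament C⃗_{2n+1}(1,2,…,n) such that {w,x,y} is not contained in any interval {a, a+1, …, a+n} of Z_{2n+1}. Then {w,x,y} induces a directed triangle (a directed 3-cycle) in C⃗_{2n+1}(1,2,…,n). -/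
lemma cyc_total (n : ℕ) (a b : ZMod (2*n+1)) (hab : a ≠ b) :
    CycArc n a b ∨ CycArc n b a := by
  haveI : NeZero (2*n+1) := ⟨by omega⟩
  have h1 : (b - a).val < 2*n+1 := ZMod.val_lt _
  have h2 : (a - b).val < 2*n+1 := ZMod.val_lt _
  have h3 : (b - a) ≠ 0 := sub_ne_zero.mpr (Ne.symm hab)
  have h4 : (a - b) ≠ 0 := sub_ne_zero.mpr hab
  have h5 : (b - a).val ≠ 0 := fun hc => h3 ((ZMod.val_eq_zero _).mp hc)
  have h6 : (a - b).val ≠ 0 := fun hc => h4 ((ZMod.val_eq_zero _).mp hc)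
  have hsum : ((b - a) + (a - b) : ZMod (2*n+1)) = 0 := by ring
  have hv : ((b - a).val + (a - b).val) % (2*n+1) = 0 := by
    rw [← ZMod.val_add, hsum, ZMod.val_zero]
  have hdvd : (2*n+1) ∣ (b - a).val + (a - b).val := Nat.dvd_of_mod_eq_zero hv
  obtain ⟨k, hk⟩ := hdvd
  have hk1 : k = 1 := by
    rcases k with _ | _ | k
    · omega
    · rfl
    · exfalso
      have : (2*n+1) * 2 ≤ (2*n+1) * (k + 1 + 1) := Nat.mul_le_mul_left _ (by omega)
      omega
  subst hk1
  simp only [CycArc, Finset.mem_Icc]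
  omega

theorem stmt6 (n : ℕ) (hn : 1 ≤ n) (w x y : ZMod (2*n+1))
    (hwx : w ≠ x) (hwy : w ≠ y) (hxy : x ≠ y)
    (h : ¬ ∃ a : ZMod (2*n+1), ({w, x, y} : Set (ZMod (2*n+1))) ⊆ {v | (v - a).val ≤ n}) :
    (CycArc n w x ∧ CycArc n x y ∧ CycArc n y w) ∨
    (CycArc n w y ∧ CycArc n y x ∧ CycArc n x w) := by
  have tle : ∀ a b : ZMod (2*n+1), CycArc n a b → (b - a).val ≤ n := by
    intro a b hab
    simp only [CycArc, Finset.mem_Icc] at hab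
    exact hab.2
  have self : ∀ s : ZMod (2*n+1), (s - s).val ≤ n := by
    intro s; simp
  have src : ∀ s u v : ZMod (2*n+1), s = w ∨ s = x ∨ s = y → u = w ∨ u = x ∨ u = y →
      v = w ∨ v = x ∨ v = y → CycArc n s u → CycArc n s v →
      ({w, x, y} : Set (ZMod (2*n+1))) = {s, u, v} → False := by
    intro s u v _ _ _ hsu hsv hset
    apply h
    refine ⟨s, ?_⟩
    rw [hset]
    intro z hz
    simp only [Set.mem_insert_iff, Set.mem_singleton_iff] at hz
    simp only [Set.mem_setOf_eq]
    rcases hz with hz | hz | hz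
    · rw [hz]; exact self s
    · rw [hz]; exact tle s u hsu
    · rw [hz]; exact tle s v hsv
  rcases cyc_total n w x hwx with hWX | hXW <;>
  rcases cyc_total n x y hxy with hXY | hYX <;>
  rcases cyc_total n w y hwy with hWY | hYW
  · exact (src w x y (Or.inl rfl) (Or.inr (Or.inl rfl)) (Or.inr (Or.inr rfl)) hWX hWY rfl).elim
  · exact Or.inl ⟨hWX, hXY, hYW⟩
  · exact (src w x y (Or.inl rfl) (Or.inr (Or.inl rfl)) (Or.inr (Or.inr rfl)) hWX hWY rfl).elim
  · exact (src y w x (Or.inr (Or.inr rfl)) (Or.inl rfl) (Or.inr (Or.inl rfl)) hYW hYX (by ext z; simp; tauto)).elim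
  · exact (src x y w (Or.inr (Or.inl rfl)) (Or.inr (Or.inr rfl)) (Or.inl rfl) hXY hXW (by ext z; simp; tauto)).elim
  · exact (src x y w (Or.inr (Or.inl rfl)) (Or.inr (Or.inr rfl)) (Or.inl rfl) hXY hXW (by ext z; simp; tauto)).elim
  · exact Or.inr ⟨hWY, hYX, hXW⟩
  · exact (src y x w (Or.inr (Or.inr rfl)) (Or.inr (Or.inl rfl)) (Or.inl rfl) hYX hYW (by ext z; simp; tauto)).elim
end

section
/- For every n ≥ 1, the 2-dicoloring graph of the cyclic circulant tournament C⃗_{2n+1}(1,2,…,n) is a cycle of length 4n+2, and hence has diameter 2n+1. -/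
namespace Stmt7Aux

lemma modm (m t : ℕ) (h : t < 2*m) : t % m = if t < m then t else t - m := by
  split
  · exact Nat.mod_eq_of_lt ‹_›
  · rw [Nat.mod_eq_sub_mod (by omega), Nat.mod_eq_of_lt (by omega)]

lemma sub_val (m : ℕ) [NeZero m] (x y : ZMod m) : (y - x).val = (y.val + m - x.val) % m := by
  have hx : x.val ≤ y.val + m := le_trans (ZMod.val_lt x).le (by omega)
  have : (y - x) = ((y.val + m - x.val : ℕ) : ZMod m) := by
    rw [Nat.cast_sub hx]
    push_cast
    rw [ZMod.natCast_zmod_val, ZMod.natCast_zmod_val, ZMod.natCast_self]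
    ring
  rw [this, ZMod.val_natCast]

variable {n : ℕ}

/-- the coloring with color class `c` equal to the window `[i, i+n]`. -/
def chi (n : ℕ) (i : ZMod (2*n+1)) (c : Fin 2) : ZMod (2*n+1) → Fin 2 :=
  fun v => if (v - i).val ≤ n then c else c + 1

lemma fin2_add_one_ne (c : Fin 2) : c + 1 ≠ c := by revert c; decide

lemma fin2_eq_add_one_of_ne {d c : Fin 2} (h : d ≠ c) : d = c + 1 := by
  revert h; revert d c; decide

lemma fin2_add_one_add_one (c : Fin 2) : c + 1 + 1 = c := by revert c; decide

lemma arc_val (j x y : ZMod (2*n+1)) (hx : (x - j).val ≤ n) (hy : (y - j).val ≤ n)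
    (h : CycArc n x y) : (x - j).val < (y - j).val := by
  simp only [CycArc, Finset.mem_Icc] at h
  have hrw : y - j = (x - j) + (y - x) := by ring
  have := ZMod.val_add (x - j) (y - x)
  rw [← hrw] at this
  rw [this, Nat.mod_eq_of_lt (by omega)]
  omega

lemma acyclicOn_window (j : ZMod (2*n+1)) (S : Set (ZMod (2*n+1)))
    (hS : ∀ v ∈ S, (v - j).val ≤ n) : AcyclicOn (CycArc n) S := by
  intro v hv
  have key : ∀ x y : ZMod (2*n+1),
      Relation.TransGen (fun a b => a ∈ S ∧ b ∈ S ∧ CycArc n a b) x y →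
      (x - j).val < (y - j).val := by
    intro x y h
    induction h with
    | single h => exact arc_val j _ _ (hS _ h.1) (hS _ h.2.1) h.2.2
    | tail _ h ih => exact ih.trans (arc_val j _ _ (hS _ h.1) (hS _ h.2.1) h.2.2)
  exact absurd (key v v hv) (lt_irrefl _)

lemma shift_val (hn : 1 ≤ n) (x : ZMod (2*n+1)) (h : ¬ x.val ≤ n) :
    (x - ((n : ZMod (2*n+1)) + 1)).val ≤ n := by
  have hlt := ZMod.val_lt x
  have hcast : ((n : ZMod (2*n+1)) + 1) = ((n + 1 : ℕ) : ZMod (2*n+1)) := by push_cast; ring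
  have hx : x - ((n : ZMod (2*n+1)) + 1) = ((x.val - (n+1) : ℕ) : ZMod (2*n+1)) := by
    rw [Nat.cast_sub (by omega), hcast, ZMod.natCast_zmod_val]
  rw [hx, ZMod.val_natCast, Nat.mod_eq_of_lt (by omega)]
  omega

lemma chi_class_c (i : ZMod (2*n+1)) (c : Fin 2) :
    {v | chi n i c v = c} = {v : ZMod (2*n+1) | (v - i).val ≤ n} := by
  ext v
  simp only [chi, Set.mem_setOf_eq]
  split
  · exact iff_of_true rfl ‹_›
  · exact iff_of_false (fin2_add_one_ne c) ‹_›

lemma chi_class_c1 (i : ZMod (2*n+1)) (c : Fin 2) :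
    {v | chi n i c v = c + 1} = {v : ZMod (2*n+1) | ¬ (v - i).val ≤ n} := by
  ext v
  simp only [chi, Set.mem_setOf_eq]
  split
  · exact iff_of_false (Ne.symm (fin2_add_one_ne c)) (not_not_intro ‹_›)
  · exact iff_of_true rfl ‹_›

lemma chi_acyclic (hn : 1 ≤ n) (i : ZMod (2*n+1)) (c : Fin 2) :
    IsAcyclicColoring (CycArc n) 2 (chi n i c) := by
  intro d
  by_cases hdc : d = c
  · subst hdc
    rw [chi_class_c]
    exact acyclicOn_window i _ (fun v hv => hv)
  · rw [fin2_eq_add_one_of_ne hdc, chi_class_c1]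
    apply acyclicOn_window (i + (n : ZMod (2*n+1)) + 1)
    intro v hv
    have : v - (i + (n : ZMod (2*n+1)) + 1) = (v - i) - ((n : ZMod (2*n+1)) + 1) := by ring
    rw [this]
    exact shift_val hn _ hv

lemma cycArc_of_gt (hn : 1 ≤ n) {x s : ZMod (2*n+1)} (h : n < (x - s).val) : CycArc n x s := by
  simp only [CycArc, Finset.mem_Icc]
  have h1 := sub_val (2*n+1) x s
  have h2 := sub_val (2*n+1) s x
  have hx := ZMod.val_lt x
  have hs := ZMod.val_lt s
  rw [modm _ _ (by omega)] at h1 h2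
  split at h1 <;> split at h2 <;> omega

lemma exists_window (S : Set (ZMod (2*n+1))) (hn : 1 ≤ n) (hac : AcyclicOn (CycArc n) S)
    {s0 : ZMod (2*n+1)} (hs0 : s0 ∈ S) : ∃ s ∈ S, ∀ x ∈ S, (x - s).val ≤ n := by
  by_contra hcon
  push_neg at hcon
  classical
  have step : ∀ s, ∃ x, (s ∈ S → x ∈ S ∧ CycArc n x s) := by
    intro s
    by_cases hs : s ∈ S
    · obtain ⟨x, hx, hgt⟩ := hcon s hs
      exact ⟨x, fun _ => ⟨hx, cycArc_of_gt hn hgt⟩⟩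
    · exact ⟨s, fun h => absurd h hs⟩
  choose t ht using step
  have hiter : ∀ (s : ZMod (2*n+1)), s ∈ S → ∀ k, t^[k] s ∈ S := by
    intro s hs k
    induction k with
    | zero => simpa using hs
    | succ k ih =>
      rw [Function.iterate_succ_apply']
      exact (ht _ ih).1
  set R := fun a b : ZMod (2*n+1) => a ∈ S ∧ b ∈ S ∧ CycArc n a b with hR
  have chain : ∀ (s : ZMod (2*n+1)), s ∈ S → ∀ k, 0 < k → Relation.TransGen R (t^[k] s) s := by
    intro s hs k hk
    induction k with
    | zero => omega
    | succ k ih =>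
      rcases Nat.eq_zero_or_pos k with rfl | hpos
      · rw [Function.iterate_one]
        exact Relation.TransGen.single ⟨(ht s hs).1, hs, (ht s hs).2⟩
      · have hmem := hiter s hs k
        rw [Function.iterate_succ_apply']
        exact Relation.TransGen.head ⟨(ht _ hmem).1, hmem, (ht _ hmem).2⟩ (ih hpos)
  obtain ⟨a, b, hab, heq⟩ := Finite.exists_ne_map_eq_of_infinite (fun k : ℕ => t^[k] s0)
  wlog hlt : a < b generalizing a b
  · exact this b a hab.symm heq.symm (by omega)
  have hv : t^[a] s0 ∈ S := hiter s0 hs0 a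
  have hcyc : Relation.TransGen R (t^[b-a] (t^[a] s0)) (t^[a] s0) := chain _ hv (b-a) (by omega)
  rw [← Function.iterate_add_apply, Nat.sub_add_cancel hlt.le, ← heq] at hcyc
  exact hac _ hcyc

lemma not_acyclic_univ (hn : 1 ≤ n) :
    ¬ AcyclicOn (CycArc n) (Set.univ : Set (ZMod (2*n+1))) := by
  intro h
  have harc : ∀ a b : ZMod (2*n+1), CycArc n a b →
      Relation.TransGen (fun x y : ZMod (2*n+1) => x ∈ Set.univ ∧ y ∈ Set.univ ∧ CycArc n x y) a b :=
    fun a b hab => Relation.TransGen.single ⟨trivial, trivial, hab⟩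
  have hvn : ((n : ℕ) : ZMod (2*n+1)).val = n := ZMod.val_cast_of_lt (by omega)
  have hv2n : ((2*n : ℕ) : ZMod (2*n+1)).val = 2*n := ZMod.val_cast_of_lt (by omega)
  have hv1 : ((1 : ℕ) : ZMod (2*n+1)).val = 1 := ZMod.val_cast_of_lt (by omega)
  have h1 : CycArc n 0 (n : ZMod (2*n+1)) := by
    simp only [CycArc, Finset.mem_Icc, sub_zero, hvn]
    omega
  have h2 : CycArc n (n : ZMod (2*n+1)) ((2*n : ℕ) : ZMod (2*n+1)) := by
    have : ((2*n : ℕ) : ZMod (2*n+1)) - (n : ZMod (2*n+1)) = ((n : ℕ) : ZMod (2*n+1)) := by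
      push_cast; ring
    simp only [CycArc, Finset.mem_Icc, this, hvn]
    omega
  have h3 : CycArc n ((2*n : ℕ) : ZMod (2*n+1)) 0 := by
    have : (0 : ZMod (2*n+1)) - ((2*n : ℕ) : ZMod (2*n+1)) = ((1 : ℕ) : ZMod (2*n+1)) := by
      have hz : ((2*n+1 : ℕ) : ZMod (2*n+1)) = 0 := ZMod.natCast_self _
      push_cast at hz ⊢
      linear_combination -hz
    simp only [CycArc, Finset.mem_Icc, this, hv1]
    omega
  exact h 0 (((harc _ _ h1).trans (harc _ _ h2)).trans (harc _ _ h3))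


lemma val_sub_add {m : ℕ} [NeZero m] (x y : ZMod m) (hxy : x ≠ y) :
    (x - y).val + (y - x).val = m := by
  have h1 := sub_val m y x
  have h2 := sub_val m x y
  have hx := ZMod.val_lt x
  have hy := ZMod.val_lt y
  have hne : x.val ≠ y.val := fun h => hxy (ZMod.val_injective _ h)
  rw [modm _ _ (by omega)] at h1 h2
  split at h1 <;> split at h2 <;> omega

lemma card_windowF (i : ZMod (2*n+1)) :
    (Finset.univ.filter (fun v : ZMod (2*n+1) => (v - i).val ≤ n)).card = n + 1 := by
  classical
  rw [show n + 1 = (Finset.range (n+1)).card from (Finset.card_range _).symm]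
  apply Finset.card_bij' (i := fun v _ => (v - i).val)
    (j := fun k _ => i + (k : ZMod (2*n+1)))
  · intro a ha
    simp only [Finset.mem_filter] at ha
    simp only [Finset.mem_range]
    omega
  · intro k hk
    simp only [Finset.mem_range] at hk
    have : (i + (k : ZMod (2*n+1))) - i = ((k:ℕ) : ZMod (2*n+1)) := by ring
    simp only [Finset.mem_filter, Finset.mem_univ, true_and, this, ZMod.val_natCast]
    rw [Nat.mod_eq_of_lt (by omega)]
    omega
  · intro a _
    rw [ZMod.natCast_zmod_val]
    ring
  · intro k hk
    simp only [Finset.mem_range] at hk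
    have : (i + (k : ZMod (2*n+1))) - i = ((k:ℕ) : ZMod (2*n+1)) := by ring
    rw [this, ZMod.val_natCast, Nat.mod_eq_of_lt (by omega)]

lemma chi_inj (hn : 1 ≤ n) {i i' : ZMod (2*n+1)} {c c' : Fin 2}
    (h : chi n i c = chi n i' c') : i = i' ∧ c = c' := by
  by_cases hii : i = i'
  · subst hii
    refine ⟨rfl, ?_⟩
    have h2 := congrFun h i
    simpa [chi] using h2
  · exfalso
    have hd := val_sub_add i' i (Ne.symm hii)
    have hd0 : (i' - i).val ≠ 0 := by
      simp only [ne_eq, ZMod.val_eq_zero, sub_eq_zero]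
      exact Ne.symm hii
    have h1 := congrFun h i'
    have h2 := congrFun h i
    simp only [chi, sub_self, ZMod.val_zero, Nat.zero_le, if_pos] at h1 h2
    rcases le_or_gt ((i' - i).val) n with hle | hgt
    · rw [if_pos hle] at h1
      rw [if_neg (by omega)] at h2
      rw [h1] at h2
      exact fin2_add_one_ne c' h2.symm
    · rw [if_neg (by omega)] at h1
      rw [if_pos (by omega)] at h2
      rw [h2] at h1
      exact fin2_add_one_ne c' h1

lemma acyclic_char (hn : 1 ≤ n) (α : ZMod (2*n+1) → Fin 2)
    (h : IsAcyclicColoring (CycArc n) 2 α) : ∃ i c, α = chi n i c := by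
  classical
  have hne : ∀ c : Fin 2, {v | α v = c}.Nonempty := by
    intro c
    rcases Set.eq_empty_or_nonempty {v | α v = c} with he | hne
    · exfalso
      have hall : ∀ v, α v = c + 1 := by
        intro v
        apply fin2_eq_add_one_of_ne
        intro hc
        exact Set.eq_empty_iff_forall_notMem.mp he v hc
      have huniv : {v | α v = c + 1} = Set.univ := by
        ext v; simpa using hall v
      exact not_acyclic_univ hn (huniv ▸ h (c+1))
    · exact hne
  obtain ⟨s0, hs0mem, hs0⟩ := exists_window {v | α v = 0} hn (h 0) (hne 0).choose_spec
  obtain ⟨s1, hs1mem, hs1⟩ := exists_window {v | α v = 1} hn (h 1) (hne 1).choose_spec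
  set F0 := Finset.univ.filter (fun v : ZMod (2*n+1) => α v = 0) with hF0
  set F1 := Finset.univ.filter (fun v : ZMod (2*n+1) => α v = 1) with hF1
  set W0 := Finset.univ.filter (fun v : ZMod (2*n+1) => (v - s0).val ≤ n) with hW0
  set W1 := Finset.univ.filter (fun v : ZMod (2*n+1) => (v - s1).val ≤ n) with hW1
  have hsub0 : F0 ⊆ W0 := by
    intro v hv
    simp only [hF0, Finset.mem_filter, Finset.mem_univ, true_and] at hv
    simp only [hW0, Finset.mem_filter, Finset.mem_univ, true_and]
    exact hs0 v hv
  have hsub1 : F1 ⊆ W1 := by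
    intro v hv
    simp only [hF1, Finset.mem_filter, Finset.mem_univ, true_and] at hv
    simp only [hW1, Finset.mem_filter, Finset.mem_univ, true_and]
    exact hs1 v hv
  have hcardW0 : W0.card = n + 1 := card_windowF s0
  have hcardW1 : W1.card = n + 1 := card_windowF s1
  have hsum : F0.card + F1.card = 2*n+1 := by
    have := Finset.card_filter_add_card_filter_not
      (s := (Finset.univ : Finset (ZMod (2*n+1)))) (fun v => α v = 0)
    have hfe : Finset.univ.filter (fun v : ZMod (2*n+1) => ¬ α v = 0)
        = Finset.univ.filter (fun v : ZMod (2*n+1) => α v = 1) := by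
      apply Finset.filter_congr
      intro v _
      have : ∀ x : Fin 2, (¬ x = 0) ↔ x = 1 := by decide
      simp [this]
    rw [hfe] at this
    rw [hF0, hF1, this, Finset.card_univ, ZMod.card]
  have hc0le : F0.card ≤ n + 1 := hcardW0 ▸ Finset.card_le_card hsub0
  have hc1le : F1.card ≤ n + 1 := hcardW1 ▸ Finset.card_le_card hsub1
  by_cases hc0 : F0.card = n + 1
  · have heq : F0 = W0 := Finset.eq_of_subset_of_card_le hsub0 (by omega)
    refine ⟨s0, 0, funext fun v => ?_⟩
    by_cases hw : (v - s0).val ≤ n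
    · have hv : v ∈ F0 := heq ▸ (by
        simp only [hW0, Finset.mem_filter, Finset.mem_univ, true_and]; exact hw)
      simp only [hF0, Finset.mem_filter, Finset.mem_univ, true_and] at hv
      rw [hv, chi, if_pos hw]
    · have hv : v ∉ F0 := heq ▸ (by
        simp only [hW0, Finset.mem_filter, Finset.mem_univ, true_and]; exact hw)
      simp only [hF0, Finset.mem_filter, Finset.mem_univ, true_and] at hv
      rw [fin2_eq_add_one_of_ne hv, chi, if_neg hw]
  · have hc1 : F1.card = n + 1 := by omega
    have heq : F1 = W1 := Finset.eq_of_subset_of_card_le hsub1 (by omega)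
    refine ⟨s1, 1, funext fun v => ?_⟩
    by_cases hw : (v - s1).val ≤ n
    · have hv : v ∈ F1 := heq ▸ (by
        simp only [hW1, Finset.mem_filter, Finset.mem_univ, true_and]; exact hw)
      simp only [hF1, Finset.mem_filter, Finset.mem_univ, true_and] at hv
      rw [hv, chi, if_pos hw]
    · have hv : v ∉ F1 := heq ▸ (by
        simp only [hW1, Finset.mem_filter, Finset.mem_univ, true_and]; exact hw)
      simp only [hF1, Finset.mem_filter, Finset.mem_univ, true_and] at hv
      rw [fin2_eq_add_one_of_ne hv, chi, if_neg hw]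


lemma fin2_ne_add_one (c : Fin 2) : c ≠ c + 1 := Ne.symm (fin2_add_one_ne c)

lemma chi_shift_eval (i : ZMod (2*n+1)) (c' : Fin 2) (b : ℕ) (hb : b ≤ 2*n) (v : ZMod (2*n+1)) :
    chi n (i + (b : ℕ)) c' v =
      if ((v - i).val + (2*n+1) - b) % (2*n+1) ≤ n then c' else c'+1 := by
  have hrw : v - (i + ((b:ℕ) : ZMod (2*n+1))) = (v - i) - ((b:ℕ) : ZMod (2*n+1)) := by ring
  rw [chi, hrw, sub_val, ZMod.val_natCast, Nat.mod_eq_of_lt (show b < 2*n+1 by omega)]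

lemma val_offset (i : ZMod (2*n+1)) (a : ℕ) : ((i + (a : ℕ)) - i).val = a % (2*n+1) := by
  have : (i + ((a:ℕ) : ZMod (2*n+1))) - i = ((a:ℕ) : ZMod (2*n+1)) := by ring
  rw [this, ZMod.val_natCast]

lemma chi_eval (i : ZMod (2*n+1)) (c' : Fin 2) (b a : ℕ) (hb : b ≤ 2*n) :
    chi n (i + (b : ℕ)) c' (i + (a : ℕ)) =
      if (a % (2*n+1) + (2*n+1) - b) % (2*n+1) ≤ n then c' else c'+1 := by
  rw [chi_shift_eval i c' b hb, val_offset]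

lemma chi_eval0 (i : ZMod (2*n+1)) (c' : Fin 2) (a : ℕ) :
    chi n i c' (i + (a : ℕ)) = if a % (2*n+1) ≤ n then c' else c'+1 := by
  rw [chi, val_offset]

lemma chi_eval_in (i : ZMod (2*n+1)) (c' : Fin 2) {b a : ℕ} (hb : b ≤ 2*n)
    (h : (a % (2*n+1) + (2*n+1) - b) % (2*n+1) ≤ n) :
    chi n (i + (b : ℕ)) c' (i + (a : ℕ)) = c' := by
  rw [chi_eval i c' b a hb, if_pos h]

lemma chi_eval_out (i : ZMod (2*n+1)) (c' : Fin 2) {b a : ℕ} (hb : b ≤ 2*n)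
    (h : ¬ ((a % (2*n+1) + (2*n+1) - b) % (2*n+1) ≤ n)) :
    chi n (i + (b : ℕ)) c' (i + (a : ℕ)) = c' + 1 := by
  rw [chi_eval i c' b a hb, if_neg h]

lemma chi_eval0_in (i : ZMod (2*n+1)) (c' : Fin 2) {a : ℕ} (h : a % (2*n+1) ≤ n) :
    chi n i c' (i + (a : ℕ)) = c' := by
  rw [chi_eval0, if_pos h]

lemma chi_eval0_out (i : ZMod (2*n+1)) (c' : Fin 2) {a : ℕ} (h : ¬ (a % (2*n+1) ≤ n)) :
    chi n i c' (i + (a : ℕ)) = c' + 1 := by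
  rw [chi_eval0, if_neg h]

lemma offset_ne (i : ZMod (2*n+1)) {a b : ℕ} (h : a % (2*n+1) ≠ b % (2*n+1)) :
    i + (a : ℕ) ≠ i + (b : ℕ) := by
  intro hab
  apply h
  have h2 := add_left_cancel hab
  calc a % (2*n+1) = ((a:ℕ) : ZMod (2*n+1)).val := (ZMod.val_natCast _ a).symm
    _ = ((b:ℕ) : ZMod (2*n+1)).val := by rw [h2]
    _ = b % (2*n+1) := ZMod.val_natCast _ b

lemma two_point {f g : ZMod (2*n+1) → Fin 2} (h : ∃! v, f v ≠ g v)
    {p1 p2 : ZMod (2*n+1)} (h1 : f p1 ≠ g p1) (h2 : f p2 ≠ g p2) (hne : p1 ≠ p2) : False := by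
  obtain ⟨v0, -, hu⟩ := h
  exact hne ((hu p1 h1).trans (hu p2 h2).symm)

lemma diff1 (hn : 1 ≤ n) (i : ZMod (2*n+1)) (c : Fin 2) (v : ZMod (2*n+1)) :
    (chi n i c v ≠ chi n (i + ((n+1 : ℕ) : ZMod (2*n+1))) (c+1) v) ↔ v = i := by
  obtain ⟨t, hts⟩ : ∃ t, (v - i).val = t := ⟨_, rfl⟩
  have ht : t < 2*n+1 := hts ▸ ZMod.val_lt (v - i)
  have hvi : v = i ↔ t = 0 := by rw [← hts, ZMod.val_eq_zero, sub_eq_zero]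
  rw [chi_shift_eval i (c+1) (n+1) (by omega) v, chi, hts, hvi,
    modm (2*n+1) (t + (2*n+1) - (n+1)) (by omega)]
  rcases Nat.eq_zero_or_pos t with ht0 | htpos
  · subst ht0
    rw [if_pos (show (0:ℕ) ≤ n by omega),
      if_pos (show 0 + (2*n+1) - (n+1) < 2*n+1 by omega),
      if_pos (show 0 + (2*n+1) - (n+1) ≤ n by omega)]
    exact iff_of_true (fin2_ne_add_one c) rfl
  · by_cases hle : t ≤ n
    · rw [if_pos hle, if_pos (show t + (2*n+1) - (n+1) < 2*n+1 by omega),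
        if_neg (show ¬ (t + (2*n+1) - (n+1) ≤ n) by omega), fin2_add_one_add_one]
      exact iff_of_false (fun hh => hh rfl) (by omega)
    · rw [if_neg hle, if_neg (show ¬ (t + (2*n+1) - (n+1) < 2*n+1) by omega),
        if_pos (show t + (2*n+1) - (n+1) - (2*n+1) ≤ n by omega)]
      exact iff_of_false (fun hh => hh rfl) (by omega)

lemma diff2 (hn : 1 ≤ n) (i : ZMod (2*n+1)) (c : Fin 2) (v : ZMod (2*n+1)) :
    (chi n i c v ≠ chi n (i + ((n : ℕ) : ZMod (2*n+1))) (c+1) v) ↔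
      v = i + ((n : ℕ) : ZMod (2*n+1)) := by
  obtain ⟨t, hts⟩ : ∃ t, (v - i).val = t := ⟨_, rfl⟩
  have ht : t < 2*n+1 := hts ▸ ZMod.val_lt (v - i)
  have hvn : v = i + ((n : ℕ) : ZMod (2*n+1)) ↔ t = n := by
    constructor
    · intro h
      rw [← hts, h, val_offset, Nat.mod_eq_of_lt (show n < 2*n+1 by omega)]
    · intro h
      have h2 : v - i = ((n:ℕ) : ZMod (2*n+1)) := by
        rw [← ZMod.natCast_zmod_val (v - i), hts, h]
      rw [← h2]; ring
  rw [chi_shift_eval i (c+1) n (by omega) v, chi, hts, hvn,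
    modm (2*n+1) (t + (2*n+1) - n) (by omega)]
  rcases lt_trichotomy t n with hlt | heq | hgt
  · rw [if_pos (show t ≤ n by omega), if_pos (show t + (2*n+1) - n < 2*n+1 by omega),
      if_neg (show ¬ (t + (2*n+1) - n ≤ n) by omega), fin2_add_one_add_one]
    exact iff_of_false (fun hh => hh rfl) (by omega)
  · subst heq
    rw [if_pos (show t ≤ t by omega), if_neg (show ¬ (t + (2*t+1) - t < 2*t+1) by omega),
      if_pos (show t + (2*t+1) - t - (2*t+1) ≤ t by omega)]
    exact iff_of_true (fin2_ne_add_one c) rfl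
  · rw [if_neg (show ¬ (t ≤ n) by omega), if_neg (show ¬ (t + (2*n+1) - n < 2*n+1) by omega),
      if_pos (show t + (2*n+1) - n - (2*n+1) ≤ n by omega)]
    exact iff_of_false (fun hh => hh rfl) (by omega)

lemma adj_of1 (hn : 1 ≤ n) (i : ZMod (2*n+1)) (c : Fin 2) :
    ∃! v, chi n i c v ≠ chi n (i + ((n+1 : ℕ) : ZMod (2*n+1))) (c+1) v :=
  ⟨i, (diff1 hn i c i).mpr rfl, fun v hv => (diff1 hn i c v).mp hv⟩

lemma adj_of2 (hn : 1 ≤ n) (i : ZMod (2*n+1)) (c : Fin 2) :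
    ∃! v, chi n i c v ≠ chi n (i + ((n : ℕ) : ZMod (2*n+1))) (c+1) v :=
  ⟨i + ((n : ℕ) : ZMod (2*n+1)), (diff2 hn i c _).mpr rfl,
    fun v hv => (diff2 hn i c v).mp hv⟩

lemma adj_char (hn : 1 ≤ n) {i i' : ZMod (2*n+1)} {c c' : Fin 2}
    (h : ∃! v, chi n i c v ≠ chi n i' c' v) :
    c' = c + 1 ∧ ((i' - i).val = n ∨ (i' - i).val = n + 1) := by
  obtain ⟨d, hds⟩ : ∃ d, (i' - i).val = d := ⟨_, rfl⟩
  have hdlt : d < 2*n+1 := hds ▸ ZMod.val_lt (i' - i)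
  have hi' : i' = i + ((d : ℕ) : ZMod (2*n+1)) := by
    rw [← hds, ZMod.natCast_zmod_val]; ring
  rw [hds]
  rw [hi'] at h
  have hcc : c' = c + 1 := by
    by_contra hcc
    have hc'c : c' = c := by rw [fin2_eq_add_one_of_ne hcc, fin2_add_one_add_one]
    subst hc'c
    rcases Nat.eq_zero_or_pos d with hd0 | hdpos
    · subst hd0
      obtain ⟨v0, hv0, -⟩ := h
      have hzz : i + ((0:ℕ) : ZMod (2*n+1)) = i := by push_cast; ring
      rw [hzz] at hv0
      exact hv0 rfl
    · rcases le_or_gt d n with hdn | hdn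
      · refine two_point h (p1 := i + ((0:ℕ) : ZMod (2*n+1)))
          (p2 := i + ((d+n : ℕ) : ZMod (2*n+1))) ?_ ?_ ?_
        · rw [chi_eval0_in i c' (show 0 % (2*n+1) ≤ n by rw [Nat.zero_mod]; omega),
            chi_eval_out i c' (show d ≤ 2*n by omega)
              (show ¬ ((0 % (2*n+1) + (2*n+1) - d) % (2*n+1) ≤ n) by
                rw [Nat.zero_mod, modm (2*n+1) (0 + (2*n+1) - d) (by omega)]
                split <;> omega)]
          exact fin2_ne_add_one c'
        · rw [chi_eval0_out i c' (show ¬ ((d+n) % (2*n+1) ≤ n) by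
              rw [Nat.mod_eq_of_lt (show d+n < 2*n+1 by omega)]; omega),
            chi_eval_in i c' (show d ≤ 2*n by omega)
              (show ((d+n) % (2*n+1) + (2*n+1) - d) % (2*n+1) ≤ n by
                rw [Nat.mod_eq_of_lt (show d+n < 2*n+1 by omega),
                  modm (2*n+1) (d + n + (2*n+1) - d) (by omega)]
                split <;> omega)]
          exact fin2_add_one_ne c'
        · exact offset_ne i (by
            rw [Nat.zero_mod, Nat.mod_eq_of_lt (show d+n < 2*n+1 by omega)]; omega)
      · refine two_point h (p1 := i + ((d:ℕ) : ZMod (2*n+1)))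
          (p2 := i + ((n : ℕ) : ZMod (2*n+1))) ?_ ?_ ?_
        · rw [chi_eval0_out i c' (show ¬ (d % (2*n+1) ≤ n) by
              rw [Nat.mod_eq_of_lt (show d < 2*n+1 by omega)]; omega),
            chi_eval_in i c' (show d ≤ 2*n by omega)
              (show (d % (2*n+1) + (2*n+1) - d) % (2*n+1) ≤ n by
                rw [Nat.mod_eq_of_lt (show d < 2*n+1 by omega),
                  modm (2*n+1) (d + (2*n+1) - d) (by omega)]
                split <;> omega)]
          exact fin2_add_one_ne c'
        · rw [chi_eval0_in i c' (show n % (2*n+1) ≤ n by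
              rw [Nat.mod_eq_of_lt (show n < 2*n+1 by omega)]),
            chi_eval_out i c' (show d ≤ 2*n by omega)
              (show ¬ ((n % (2*n+1) + (2*n+1) - d) % (2*n+1) ≤ n) by
                rw [Nat.mod_eq_of_lt (show n < 2*n+1 by omega),
                  modm (2*n+1) (n + (2*n+1) - d) (by omega)]
                split <;> omega)]
          exact fin2_ne_add_one c'
        · exact offset_ne i (by
            rw [Nat.mod_eq_of_lt (show d < 2*n+1 by omega),
              Nat.mod_eq_of_lt (show n < 2*n+1 by omega)]; omega)
  subst hcc
  refine ⟨rfl, ?_⟩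
  by_contra hdd
  push_neg at hdd
  obtain ⟨hdn, hdn1⟩ := hdd
  rcases le_or_gt d (n-1) with hle | hgt
  · have hdn' : d ≤ n - 1 := hle
    refine two_point h (p1 := i + ((d:ℕ) : ZMod (2*n+1)))
      (p2 := i + ((d+1 : ℕ) : ZMod (2*n+1))) ?_ ?_ ?_
    · rw [chi_eval0_in i c (show d % (2*n+1) ≤ n by
          rw [Nat.mod_eq_of_lt (show d < 2*n+1 by omega)]; omega),
        chi_eval_in i (c+1) (show d ≤ 2*n by omega)
          (show (d % (2*n+1) + (2*n+1) - d) % (2*n+1) ≤ n by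
            rw [Nat.mod_eq_of_lt (show d < 2*n+1 by omega),
              modm (2*n+1) (d + (2*n+1) - d) (by omega)]
            split <;> omega)]
      exact fin2_ne_add_one c
    · rw [chi_eval0_in i c (show (d+1) % (2*n+1) ≤ n by
          rw [Nat.mod_eq_of_lt (show d+1 < 2*n+1 by omega)]; omega),
        chi_eval_in i (c+1) (show d ≤ 2*n by omega)
          (show ((d+1) % (2*n+1) + (2*n+1) - d) % (2*n+1) ≤ n by
            rw [Nat.mod_eq_of_lt (show d+1 < 2*n+1 by omega),
              modm (2*n+1) (d + 1 + (2*n+1) - d) (by omega)]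
            split <;> omega)]
      exact fin2_ne_add_one c
    · exact offset_ne i (by
        rw [Nat.mod_eq_of_lt (show d < 2*n+1 by omega),
          Nat.mod_eq_of_lt (show d+1 < 2*n+1 by omega)]; omega)
  · have hd2 : n + 2 ≤ d := by omega
    refine two_point h (p1 := i + ((0:ℕ) : ZMod (2*n+1)))
      (p2 := i + ((1 : ℕ) : ZMod (2*n+1))) ?_ ?_ ?_
    · rw [chi_eval0_in i c (show 0 % (2*n+1) ≤ n by rw [Nat.zero_mod]; omega),
        chi_eval_in i (c+1) (show d ≤ 2*n by omega)
          (show (0 % (2*n+1) + (2*n+1) - d) % (2*n+1) ≤ n by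
            rw [Nat.zero_mod, modm (2*n+1) (0 + (2*n+1) - d) (by omega)]
            split <;> omega)]
      exact fin2_ne_add_one c
    · rw [chi_eval0_in i c (show 1 % (2*n+1) ≤ n by
          rw [Nat.mod_eq_of_lt (show 1 < 2*n+1 by omega)]; omega),
        chi_eval_in i (c+1) (show d ≤ 2*n by omega)
          (show (1 % (2*n+1) + (2*n+1) - d) % (2*n+1) ≤ n by
            rw [Nat.mod_eq_of_lt (show 1 < 2*n+1 by omega),
              modm (2*n+1) (1 + (2*n+1) - d) (by omega)]
            split <;> omega)]
      exact fin2_ne_add_one c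
    · exact offset_ne i (by
        rw [Nat.zero_mod, Nat.mod_eq_of_lt (show 1 < 2*n+1 by omega)]; omega)


/-- the neighborhood relation on (window, color) pairs -/
def Rel (n : ℕ) (i : ZMod (2*n+1)) (c : Fin 2) (i' : ZMod (2*n+1)) (c' : Fin 2) : Prop :=
  c' = c + 1 ∧ ((i' - i).val = n ∨ (i' - i).val = n + 1)

lemma rel_symm (hn : 1 ≤ n) {i i' : ZMod (2*n+1)} {c c' : Fin 2}
    (h : Rel n i c i' c') : Rel n i' c' i c := by
  obtain ⟨hc, hd⟩ := h
  constructor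
  · rw [hc, fin2_add_one_add_one]
  · have hne : i' ≠ i := by
      intro he
      rw [he, sub_self, ZMod.val_zero] at hd
      omega
    have := val_sub_add i i' (Ne.symm hne)
    omega

lemma adj_iff_rel (hn : 1 ≤ n) (i i' : ZMod (2*n+1)) (c c' : Fin 2) :
    (∃! v, chi n i c v ≠ chi n i' c' v) ↔ Rel n i c i' c' := by
  constructor
  · exact adj_char hn
  · rintro ⟨rfl, hd | hd⟩
    · have hi' : i' = i + ((n : ℕ) : ZMod (2*n+1)) := by
        have : i' = i + (((i' - i).val : ℕ) : ZMod (2*n+1)) := by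
          rw [ZMod.natCast_zmod_val]; ring
        rw [this, hd]
      rw [hi']
      exact adj_of2 hn i c
    · have hi' : i' = i + ((n + 1 : ℕ) : ZMod (2*n+1)) := by
        have : i' = i + (((i' - i).val : ℕ) : ZMod (2*n+1)) := by
          rw [ZMod.natCast_zmod_val]; ring
        rw [this, hd]
      rw [hi']
      exact adj_of1 hn i c

def colOf (n : ℕ) (m : Fin (4*n+2)) : Fin 2 := ⟨m.val % 2, Nat.mod_lt _ (by omega)⟩

def idxOf (n : ℕ) (m : Fin (4*n+2)) : ZMod (2*n+1) :=
  if m.val % 2 = 0 then ((m.val / 2 : ℕ) : ZMod (2*n+1))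
  else ((m.val / 2 : ℕ) : ZMod (2*n+1)) + ((n + 1 : ℕ) : ZMod (2*n+1))

lemma fin2_of_val_sum {a b : Fin 2} (h : a.val + b.val = 1) : b = a + 1 := by
  revert h; revert a b; decide

lemma fin2_val_ne_of_add_one {a b : Fin 2} (h : b = a + 1) : b.val ≠ a.val := by
  revert h; revert a b; decide

lemma modm3 (m t : ℕ) (h : t < 3*m) : t % m =
    if t < m then t else if t < 2*m then t - m else t - 2*m := by
  split
  · exact Nat.mod_eq_of_lt ‹_›
  · rw [Nat.mod_eq_sub_mod (by omega), modm m _ (by omega)]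
    split <;> split <;> omega

lemma fin_sub_val {N : ℕ} (m m' : Fin (N+1)) :
    (m' - m).val = (m'.val + (N+1) - m.val) % (N+1) := by
  rw [Fin.sub_def]
  simp only
  congr 1
  omega

lemma natCast_self_zero : ((2*n+1 : ℕ) : ZMod (2*n+1)) = 0 := ZMod.natCast_self _

lemma rel_step (hn : 1 ≤ n) (m m' : Fin (4*n+2))
    (hv : m'.val = m.val + 1 ∨ (m.val = 4*n+1 ∧ m'.val = 0)) :
    Rel n (idxOf n m) (colOf n m) (idxOf n m') (colOf n m') := by
  have hm := m.isLt
  have hm' := m'.isLt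
  have hz := natCast_self_zero (n := n)
  push_cast at hz
  constructor
  · apply fin2_of_val_sum
    show m.val % 2 + m'.val % 2 = 1
    omega
  · -- index difference is always n+1 in this orientation
    right
    have key : idxOf n m' - idxOf n m = ((n + 1 : ℕ) : ZMod (2*n+1)) := by
      rcases hv with hv | ⟨hv1, hv2⟩
      · by_cases hpar : m.val % 2 = 0
        · rw [idxOf, idxOf, if_pos hpar, if_neg (show ¬ (m'.val % 2 = 0) by omega),
            show m'.val / 2 = m.val / 2 by omega]
          ring
        · rw [idxOf, idxOf, if_neg hpar, if_pos (show m'.val % 2 = 0 by omega),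
            show m'.val / 2 = m.val / 2 + 1 by omega]
          push_cast
          linear_combination -hz
      · rw [idxOf, idxOf, if_neg (show ¬ (m.val % 2 = 0) by omega),
          if_pos (show m'.val % 2 = 0 by omega),
          show m.val / 2 = 2*n by omega, hv2,
          show (0:ℕ) / 2 = 0 by omega]
        push_cast
        linear_combination (-2 : ZMod (2*n+1)) * hz
    rw [key, ZMod.val_natCast, Nat.mod_eq_of_lt (show n+1 < 2*n+1 by omega)]

lemma rel_to_adj_even (hn : 1 ≤ n) (m m' : Fin (4*n+2)) (hpar : m.val % 2 = 0)
    (h : Rel n (idxOf n m) (colOf n m) (idxOf n m') (colOf n m')) :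
    (SimpleGraph.cycleGraph (4*n+2)).Adj m m' := by
  have hm := m.isLt
  have hm' := m'.isLt
  obtain ⟨hc, hd⟩ := h
  have hpar' : m'.val % 2 = 1 := by
    have := fin2_val_ne_of_add_one hc
    show m'.val % 2 = 1
    have h1 : (colOf n m).val = m.val % 2 := rfl
    have h2 : (colOf n m').val = m'.val % 2 := rfl
    omega
  obtain ⟨k, hk⟩ : ∃ k, m.val = 2*k := ⟨m.val/2, by omega⟩
  obtain ⟨k', hk'⟩ : ∃ k', m'.val = 2*k'+1 := ⟨m'.val/2, by omega⟩
  have hkb : k ≤ 2*n := by omega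
  have hkb' : k' ≤ 2*n := by omega
  have hidx : idxOf n m' - idxOf n m = ((k' + 3*n + 2 - k : ℕ) : ZMod (2*n+1)) := by
    rw [idxOf, idxOf, if_pos hpar, if_neg (by omega),
      show m.val / 2 = k by omega, show m'.val / 2 = k' by omega]
    have hz := natCast_self_zero (n := n)
    rw [Nat.cast_sub (by omega)]
    push_cast at hz ⊢
    linear_combination -hz
  rw [hidx, ZMod.val_natCast, modm3 (2*n+1) _ (by omega)] at hd
  have hcase : k' = k ∨ (k' + 1 = k) ∨ (k = 0 ∧ k' = 2*n) := by
    split at hd <;> [skip; split at hd] <;> omega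
  rw [SimpleGraph.cycleGraph_adj']
  have hsub1 := fin_sub_val (N := 4*n+1) m m'
  have hsub2 := fin_sub_val (N := 4*n+1) m' m
  rcases hcase with hcs | hcs | ⟨hcs1, hcs2⟩
  · right
    rw [hsub1, modm (4*n+2) _ (by omega)]
    split <;> omega
  · left
    rw [hsub2, modm (4*n+2) _ (by omega)]
    split <;> omega
  · left
    rw [hsub2, modm (4*n+2) _ (by omega)]
    split <;> omega

lemma cycle_adj_iff (hn : 1 ≤ n) (m m' : Fin (4*n+2)) :
    (SimpleGraph.cycleGraph (4*n+2)).Adj m m' ↔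
      Rel n (idxOf n m) (colOf n m) (idxOf n m') (colOf n m') := by
  have hm := m.isLt
  have hm' := m'.isLt
  constructor
  · intro h
    rw [SimpleGraph.cycleGraph_adj'] at h
    rcases h with h | h
    · -- (m - m').val = 1 : so m = m' + 1 direction, i.e. step from m' to m
      rw [fin_sub_val (N := 4*n+1) m' m, modm (4*n+2) _ (by omega)] at h
      apply rel_symm hn
      apply rel_step hn m' m
      split at h <;> omega
    · rw [fin_sub_val (N := 4*n+1) m m', modm (4*n+2) _ (by omega)] at h
      apply rel_step hn m m'
      split at h <;> omega
  · intro h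
    by_cases hpar : m.val % 2 = 0
    · exact rel_to_adj_even hn m m' hpar h
    · have hpar' : m'.val % 2 = 0 := by
        have := fin2_val_ne_of_add_one h.1
        have h1 : (colOf n m).val = m.val % 2 := rfl
        have h2 : (colOf n m').val = m'.val % 2 := rfl
        omega
      exact (rel_to_adj_even hn m' m hpar' (rel_symm hn h)).symm


def gFun (n : ℕ) (hn : 1 ≤ n) (m : Fin (4*n+2)) :
    {α : ZMod (2*n+1) → Fin 2 // IsAcyclicColoring (CycArc n) 2 α} :=
  ⟨chi n (idxOf n m) (colOf n m), chi_acyclic hn _ _⟩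

lemma gFun_bijective (hn : 1 ≤ n) : Function.Bijective (gFun n hn) := by
  constructor
  · intro m m' h
    have h2 : chi n (idxOf n m) (colOf n m) = chi n (idxOf n m') (colOf n m') :=
      congrArg Subtype.val h
    obtain ⟨hidx, hcol⟩ := chi_inj hn h2
    have hm := m.isLt
    have hm' := m'.isLt
    have hpar : m.val % 2 = m'.val % 2 := by
      have hcv : (colOf n m).val = (colOf n m').val := by rw [hcol]
      have c1 : (colOf n m).val = m.val % 2 := rfl
      have c2 : (colOf n m').val = m'.val % 2 := rfl
      omega
    apply Fin.ext
    by_cases hp : m.val % 2 = 0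
    · rw [idxOf, idxOf, if_pos hp, if_pos (show m'.val % 2 = 0 by omega)] at hidx
      have h3 : ((m.val/2 : ℕ) : ZMod (2*n+1)).val = ((m'.val/2 : ℕ) : ZMod (2*n+1)).val := by
        rw [hidx]
      rw [ZMod.val_natCast, ZMod.val_natCast,
        Nat.mod_eq_of_lt (show m.val/2 < 2*n+1 by omega),
        Nat.mod_eq_of_lt (show m'.val/2 < 2*n+1 by omega)] at h3
      omega
    · rw [idxOf, idxOf, if_neg hp, if_neg (show ¬ (m'.val % 2 = 0) by omega)] at hidx
      have hidx2 := add_right_cancel hidx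
      have h3 : ((m.val/2 : ℕ) : ZMod (2*n+1)).val = ((m'.val/2 : ℕ) : ZMod (2*n+1)).val := by
        rw [hidx2]
      rw [ZMod.val_natCast, ZMod.val_natCast,
        Nat.mod_eq_of_lt (show m.val/2 < 2*n+1 by omega),
        Nat.mod_eq_of_lt (show m'.val/2 < 2*n+1 by omega)] at h3
      omega
  · rintro ⟨α, hα⟩
    obtain ⟨i, c, rfl⟩ := acyclic_char hn α hα
    have hilt := ZMod.val_lt i
    rcases (by decide : ∀ c : Fin 2, c = 0 ∨ c = 1) c with rfl | rfl
    · refine ⟨⟨2 * i.val, by omega⟩, ?_⟩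
      apply Subtype.ext
      show chi n (idxOf n ⟨2 * i.val, by omega⟩) (colOf n ⟨2 * i.val, by omega⟩) = chi n i 0
      have hcol : colOf n (⟨2 * i.val, by omega⟩ : Fin (4*n+2)) = 0 := by
        apply Fin.ext
        show (2 * i.val) % 2 = 0
        omega
      have hidx : idxOf n (⟨2 * i.val, by omega⟩ : Fin (4*n+2)) = i := by
        rw [idxOf, if_pos (show (2 * i.val) % 2 = 0 by omega)]
        show ((2 * i.val / 2 : ℕ) : ZMod (2*n+1)) = i
        rw [show 2 * i.val / 2 = i.val by omega, ZMod.natCast_zmod_val]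
      rw [hcol, hidx]
    · have hklt := ZMod.val_lt (i - ((n + 1 : ℕ) : ZMod (2*n+1)))
      refine ⟨⟨2 * (i - ((n + 1 : ℕ) : ZMod (2*n+1))).val + 1, by omega⟩, ?_⟩
      apply Subtype.ext
      show chi n (idxOf n _) (colOf n _) = chi n i 1
      have hcol : colOf n (⟨2 * (i - ((n + 1 : ℕ) : ZMod (2*n+1))).val + 1, by omega⟩ :
          Fin (4*n+2)) = 1 := by
        apply Fin.ext
        show (2 * (i - ((n + 1 : ℕ) : ZMod (2*n+1))).val + 1) % 2 = 1
        omega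
      have hidx : idxOf n (⟨2 * (i - ((n + 1 : ℕ) : ZMod (2*n+1))).val + 1, by omega⟩ :
          Fin (4*n+2)) = i := by
        rw [idxOf, if_neg (show ¬ ((2 * (i - ((n + 1 : ℕ) : ZMod (2*n+1))).val + 1) % 2 = 0)
          by omega)]
        show ((((2 * (i - ((n + 1 : ℕ) : ZMod (2*n+1))).val + 1) / 2 : ℕ) : ZMod (2*n+1))
          + ((n + 1 : ℕ) : ZMod (2*n+1))) = i
        rw [show (2 * (i - ((n + 1 : ℕ) : ZMod (2*n+1))).val + 1) / 2
            = (i - ((n + 1 : ℕ) : ZMod (2*n+1))).val by omega, ZMod.natCast_zmod_val]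
        ring
      rw [hcol, hidx]

noncomputable def theIso (hn : 1 ≤ n) :
    (SimpleGraph.cycleGraph (4*n+2)) ≃g (DicolGraph (CycArc n) 2) where
  toEquiv := Equiv.ofBijective (gFun n hn) (gFun_bijective hn)
  map_rel_iff' := by
    intro m m'
    show (DicolGraph (CycArc n) 2).Adj (gFun n hn m) (gFun n hn m') ↔ _
    have hiff : (DicolGraph (CycArc n) 2).Adj (gFun n hn m) (gFun n hn m') ↔
        (∃! v, chi n (idxOf n m) (colOf n m) v ≠ chi n (idxOf n m') (colOf n m') v) :=
      Iff.rfl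
    rw [hiff, adj_iff_rel hn, ← cycle_adj_iff hn]

lemma iso_edist_le {V W : Type*} {G : SimpleGraph V} {G' : SimpleGraph W}
    (f : G ≃g G') (u v : V) : G'.edist (f u) (f v) ≤ G.edist u v := by
  rw [SimpleGraph.edist_eq_sInf]
  apply le_sInf
  rintro b ⟨p, rfl⟩
  calc G'.edist (f u) (f v) ≤ ((p.map f.toHom).length : ℕ∞) := SimpleGraph.edist_le _
    _ = (p.length : ℕ∞) := by rw [SimpleGraph.Walk.length_map]

lemma iso_edist {V W : Type*} {G : SimpleGraph V} {G' : SimpleGraph W}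
    (f : G ≃g G') (u v : V) : G'.edist (f u) (f v) = G.edist u v := by
  apply le_antisymm (iso_edist_le f u v)
  have h2 := iso_edist_le f.symm (f u) (f v)
  simpa using h2

lemma iso_ediam {V W : Type*} {G : SimpleGraph V} {G' : SimpleGraph W}
    (f : G ≃g G') : G.ediam = G'.ediam := by
  apply le_antisymm
  · apply SimpleGraph.ediam_le_of_edist_le
    intro u v
    rw [← iso_edist f u v]
    exact SimpleGraph.edist_le_ediam
  · apply SimpleGraph.ediam_le_of_edist_le
    intro u v
    rw [← iso_edist f.symm u v]
    exact SimpleGraph.edist_le_ediam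

lemma cycle_walk_exists (hn : 1 ≤ n) : ∀ (k : ℕ) (u v : Fin (4*n+2)), (v - u).val = k →
    ∃ p : (SimpleGraph.cycleGraph (4*n+2)).Walk u v, p.length = k := by
  intro k
  induction k with
  | zero =>
    intro u v h
    have h0 : v - u = 0 := by
      apply Fin.ext
      rw [h]
      exact (Fin.val_zero _).symm
    have : v = u := by
      have := sub_eq_zero.mp h0
      exact this
    subst this
    exact ⟨SimpleGraph.Walk.nil, rfl⟩
  | succ k ih =>
    intro u v h
    have hlt := (v - u).isLt
    have hone : (1 : Fin (4*n+2)).val = 1 := by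
      rw [Fin.val_one']
      exact Nat.mod_eq_of_lt (by omega)
    have hadj : (SimpleGraph.cycleGraph (4*n+2)).Adj u (u+1) := by
      rw [SimpleGraph.cycleGraph_adj']
      right
      have hh : (u + 1) - u = 1 := by abel
      rw [hh, hone]
    have hklt : k + 1 < 4*n+2 := h ▸ hlt
    have hv : (v - (u+1)).val = k := by
      have heq : v - (u+1) = (v - u) - 1 := by abel
      rw [heq, fin_sub_val (N := 4*n+1) 1 (v - u), hone, h,
        modm (4*n+2) (k+1+(4*n+2)-1) (by omega),
        if_neg (show ¬ (k+1+(4*n+2)-1 < 4*n+2) by omega)]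
      omega
    obtain ⟨p, hp⟩ := ih (u+1) v hv
    exact ⟨SimpleGraph.Walk.cons hadj p, by rw [SimpleGraph.Walk.length_cons, hp]⟩

lemma cycle_edist_le' (hn : 1 ≤ n) (u v : Fin (4*n+2)) :
    (SimpleGraph.cycleGraph (4*n+2)).edist u v ≤ (((v - u).val : ℕ) : ℕ∞) := by
  obtain ⟨p, hp⟩ := cycle_walk_exists hn _ u v rfl
  exact hp ▸ SimpleGraph.edist_le p

lemma cycle_edist_le (hn : 1 ≤ n) (u v : Fin (4*n+2)) :
    (SimpleGraph.cycleGraph (4*n+2)).edist u v ≤ ((2*n+1 : ℕ) : ℕ∞) := by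
  have h1 := u.isLt
  have h2 := v.isLt
  have e1 := fin_sub_val (N := 4*n+1) u v
  have e2 := fin_sub_val (N := 4*n+1) v u
  rw [modm (4*n+2) _ (by omega)] at e1 e2
  rcases le_or_gt ((v - u).val) (2*n+1) with hle | hgt
  · exact le_trans (cycle_edist_le' hn u v) (by exact_mod_cast hle)
  · have hle' : (u - v).val ≤ 2*n+1 := by
      split at e1 <;> split at e2 <;> omega
    rw [SimpleGraph.edist_comm]
    exact le_trans (cycle_edist_le' hn v u) (by exact_mod_cast hle')

set_option maxHeartbeats 1600000 in
lemma cycle_walk_ge (hn : 1 ≤ n) (u v : Fin (4*n+2))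
    (p : (SimpleGraph.cycleGraph (4*n+2)).Walk u v) :
    min ((v - u).val) ((u - v).val) ≤ p.length := by
  induction p with
  | nil => simp
  | @cons a b c hadj q ih =>
    rw [SimpleGraph.cycleGraph_adj'] at hadj
    rw [SimpleGraph.Walk.length_cons]
    have h1 := a.isLt
    have h2 := b.isLt
    have h3 := c.isLt
    have e1 := fin_sub_val (N := 4*n+1) a c
    have e2 := fin_sub_val (N := 4*n+1) c a
    have e3 := fin_sub_val (N := 4*n+1) b c
    have e4 := fin_sub_val (N := 4*n+1) c b
    have e5 := fin_sub_val (N := 4*n+1) a b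
    have e6 := fin_sub_val (N := 4*n+1) b a
    rw [modm (4*n+2) _ (by omega)] at e1 e2 e3 e4 e5 e6
    rw [e1, e2]
    rw [e3, e4] at ih
    rcases hadj with h | h
    · rw [e6] at h
      clear e1 e2 e3 e4 e5 e6
      split_ifs at * <;> omega
    · rw [e5] at h
      clear e1 e2 e3 e4 e5 e6
      split_ifs at * <;> omega

lemma cycle_ediam (hn : 1 ≤ n) :
    (SimpleGraph.cycleGraph (4*n+2)).ediam = ((2*n+1 : ℕ) : ℕ∞) := by
  apply le_antisymm
  · exact SimpleGraph.ediam_le_of_edist_le (fun u v => cycle_edist_le hn u v)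
  · have hconn : (SimpleGraph.cycleGraph (4*n+2)).Connected :=
      SimpleGraph.cycleGraph_connected (n := 4*n+1)
    set mid : Fin (4*n+2) := ⟨2*n+1, by omega⟩ with hmid
    obtain ⟨p, hp⟩ := hconn.exists_walk_length_eq_edist 0 mid
    have hge := cycle_walk_ge hn 0 mid p
    have hv0 : (0 : Fin (4*n+2)).val = 0 := Fin.val_zero _
    have hmv : mid.val = 2*n+1 := rfl
    have e1 := fin_sub_val (N := 4*n+1) 0 mid
    have e2 := fin_sub_val (N := 4*n+1) mid 0
    rw [modm (4*n+2) _ (by omega)] at e1 e2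
    have hmin : 2*n+1 ≤ p.length := by
      rw [e1, e2, hv0, hmv] at hge
      split_ifs at hge <;> omega
    calc ((2*n+1 : ℕ) : ℕ∞) ≤ (p.length : ℕ∞) := Nat.cast_le.mpr hmin
      _ = (SimpleGraph.cycleGraph (4*n+2)).edist 0 mid := hp
      _ ≤ _ := SimpleGraph.edist_le_ediam

end Stmt7Aux

theorem stmt7 (n : ℕ) (hn : 1 ≤ n) :
    Nonempty ((DicolGraph (CycArc n) 2) ≃g SimpleGraph.cycleGraph (4*n+2)) ∧
    (DicolGraph (CycArc n) 2).diam = 2*n + 1 := by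
  constructor
  · exact ⟨(Stmt7Aux.theIso hn).symm⟩
  · have hed : (DicolGraph (CycArc n) 2).ediam = ((2*n+1 : ℕ) : ℕ∞) := by
      rw [← Stmt7Aux.iso_ediam (Stmt7Aux.theIso hn), Stmt7Aux.cycle_ediam hn]
    rw [SimpleGraph.diam, hed, ENat.toNat_coe]
end

section
/- Let n ≥ 4 with 2n+1 ≡ 0 (mod 3), and let k = (2n+1)/3. Any acyclic k-coloring of C⃗_{2n+1}⟨n⟩ all of whose color classes are forbidden triangles (sets of the form {i, i+n, i+n+1}) is an isolated vertex in the k-dicoloring graph: changing the color of any single vertex never yields an acyclic coloring. -/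
theorem stmt17 (n k : ℕ) (hn : 4 ≤ n) (hk : 3 * k = 2*n + 1)
    (α : ZMod (2*n+1) → Fin k) (hα : IsAcyclicColoring (RevArc n) k α)
    (hft : ∀ c : Fin k, ForbiddenTriangle n {v | α v = c}) :
    ∀ w, ¬ (DicolGraph (RevArc n) k).Adj ⟨α, hα⟩ w := by
  rintro ⟨β, hβ⟩ ⟨w₀, hne, huniq⟩
  simp only at hne huniq
  set c : Fin k := β w₀ with hc
  obtain ⟨i, hi⟩ := hft c
  -- facts about the α-class of c
  have hset : ∀ v, α v = c ↔ v ∈ ({i, i + (n:ZMod (2*n+1)), i + n + 1} : Set _) := by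
    intro v; rw [← Set.ext_iff.mp hi v]; rfl
  have hαi : α i = c := (hset i).mpr (by simp)
  have hαn : α (i + n) = c := (hset (i+n)).mpr (by simp)
  have hαn1 : α (i + n + 1) = c := (hset (i+n+1)).mpr (by simp)
  have hw0 : α w₀ ≠ c := hne
  -- β agrees with α away from w₀
  have hβeq : ∀ v, v ≠ w₀ → β v = α v := by
    intro v hv
    by_contra h
    exact hv (huniq v (fun h' => h h'.symm))
  have hne_i : w₀ ≠ i := fun h => hw0 (h ▸ hαi)
  have hne_n : w₀ ≠ i + n := fun h => hw0 (h ▸ hαn)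
  have hne_n1 : w₀ ≠ i + n + 1 := fun h => hw0 (h ▸ hαn1)
  -- membership in β-class S
  set S : Set (ZMod (2*n+1)) := {v | β v = c} with hS
  have hSi : i ∈ S := by show β i = c; rw [hβeq i (Ne.symm hne_i)]; exact hαi
  have hSn : i + n ∈ S := by show β (i+n) = c; rw [hβeq _ (Ne.symm hne_n)]; exact hαn
  have hSn1 : i + n + 1 ∈ S := by show β (i+n+1) = c; rw [hβeq _ (Ne.symm hne_n1)]; exact hαn1
  have hSw : w₀ ∈ S := rfl
  -- arithmetic setup
  have hplus1 : (i + n + 1 : ZMod (2*n+1)) = i + ((n+1 : ℕ) : ZMod (2*n+1)) := by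
    push_cast; ring
  set e : ℕ := (w₀ - i).val with he
  have hwi : w₀ - i = ((e : ℕ) : ZMod (2*n+1)) := (ZMod.natCast_zmod_val _).symm
  have helt : e < 2*n+1 := ZMod.val_lt _
  have he0 : e ≠ 0 := by
    intro h
    exact hne_i (by have := (ZMod.val_eq_zero _).mp h; rwa [sub_eq_zero] at this)
  have hen : e ≠ n := by
    intro h
    apply hne_n
    have : w₀ - i = ((n : ℕ) : ZMod (2*n+1)) := by rw [hwi, h]
    rw [sub_eq_iff_eq_add] at this; rw [this]; ring
  have hen1 : e ≠ n + 1 := by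
    intro h
    apply hne_n1
    have : w₀ - i = ((n+1 : ℕ) : ZMod (2*n+1)) := by rw [hwi, h]
    rw [sub_eq_iff_eq_add] at this; rw [this, hplus1]; ring
  -- the fixed arcs
  have harc_n_i : RevArc n (i + n) i := by
    right
    have h1 : i - (i + n) = ((n+1 : ℕ) : ZMod (2*n+1)) := by
      have h2 : ((n : ℕ) : ZMod (2*n+1)) + ((n+1 : ℕ) : ZMod (2*n+1)) = 0 := by
        rw [← Nat.cast_add, show n + (n+1) = 2*n+1 by ring, ZMod.natCast_self]
      linear_combination -h2
    rw [h1, ZMod.val_natCast_of_lt (by omega)]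
  have harc_i_n1 : RevArc n i (i + n + 1) := by
    right
    have h1 : (i + n + 1) - i = ((n+1 : ℕ) : ZMod (2*n+1)) := by
      rw [hplus1]; ring
    rw [h1, ZMod.val_natCast_of_lt (by omega)]
  -- the cycle, by cases on e
  rcases le_or_gt e (n-1) with hcase | hcase
  · -- cycle i → w₀ → i+n → i
    have a1 : RevArc n i w₀ := by
      left; rw [show w₀ - i = ((e:ℕ) : ZMod (2*n+1)) from hwi,
        ZMod.val_natCast_of_lt (by omega)]
      simp only [Finset.mem_Icc]; omega
    have a2 : RevArc n w₀ (i + n) := by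
      left
      have h1 : (i + n) - w₀ = ((n - e : ℕ) : ZMod (2*n+1)) := by
        rw [Nat.cast_sub (by omega)]
        have : w₀ = i + ((e:ℕ) : ZMod (2*n+1)) := by rw [← hwi]; ring
        rw [this]; ring
      rw [h1, ZMod.val_natCast_of_lt (by omega)]
      simp only [Finset.mem_Icc]; omega
    exact hβ c i (Relation.TransGen.head ⟨hSi, hSw, a1⟩
      (Relation.TransGen.head ⟨hSw, hSn, a2⟩
        (Relation.TransGen.single ⟨hSn, hSi, harc_n_i⟩)))
  · -- e ≥ n+2 ; cycle i → i+n+1 → w₀ → i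
    have he2 : n + 2 ≤ e := by omega
    have a2 : RevArc n (i + n + 1) w₀ := by
      left
      have h1 : w₀ - (i + n + 1) = ((e - (n+1) : ℕ) : ZMod (2*n+1)) := by
        rw [Nat.cast_sub (by omega)]
        have : w₀ = i + ((e:ℕ) : ZMod (2*n+1)) := by rw [← hwi]; ring
        rw [this, hplus1]; ring
      rw [h1, ZMod.val_natCast_of_lt (by omega)]
      simp only [Finset.mem_Icc]; omega
    have a3 : RevArc n w₀ i := by
      left
      have h1 : i - w₀ = ((2*n+1 - e : ℕ) : ZMod (2*n+1)) := by
        have h2 : ((e : ℕ) : ZMod (2*n+1)) + ((2*n+1 - e : ℕ) : ZMod (2*n+1)) = 0 := by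
          rw [← Nat.cast_add, show e + (2*n+1 - e) = 2*n+1 by omega, ZMod.natCast_self]
        linear_combination -hwi - h2
      rw [h1, ZMod.val_natCast_of_lt (by omega)]
      simp only [Finset.mem_Icc]; omega
    exact hβ c i (Relation.TransGen.head ⟨hSi, hSn1, harc_i_n1⟩
      (Relation.TransGen.head ⟨hSn1, hSw, a2⟩
        (Relation.TransGen.single ⟨hSw, hSi, a3⟩)))
end
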